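/- Let A = {A_t}_{t∈G} and B = {B_t}_{t∈G} be C*-algebraic bundles over a finite group G with unit element e. Let C = ⊕_{t∈G} A_t, D = ⊕_{t∈G} B_t, A = A_e, B = B_e. Suppose C and D are unital and A and B contain the unit elements of C and D, respectively. If there exists an A-B-equivalence bundle X = {X_t}_{t∈G} over G such that the span of the left C-valued inner products ⟨X_t, X_s⟩_C equals A_{ts⁻¹} and the span of the right D-valued inner products ⟨X_t, X_s⟩_D equals B_{t⁻¹s} for all t, s ∈ G, then the unital inclusions of unital C*-algebras A ⊂ C and B ⊂ D are strongly Morita equivalent. -/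
import Mathlib


noncomputable section

open scoped BigOperators

/-- The data and axioms of a Hilbert `C`-`D`-bimodule in the sense of
Brown–Mingo–Shen: a bimodule over the C*-algebras `C` and `D` carrying a
left `C`-valued and a right `D`-valued inner product, compatible with the
module actions and satisfying the associativity relation
`⟨x, y⟩_C • z = x • ⟨y, z⟩_D`. -/
structure HilbertBimod (C : Type*) (D : Type*) (Y : Type*)
    [NormedRing C] [StarRing C] [NormedRing D] [StarRing D]
    [NormedAddCommGroup Y] where
  lsmul : C → Y → Y
  rsmul : Y → D → Y
  linner : Y → Y → C
  rinner : Y → Y → D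
  lsmul_add : ∀ c x y, lsmul c (x + y) = lsmul c x + lsmul c y
  add_lsmul : ∀ c c' x, lsmul (c + c') x = lsmul c x + lsmul c' x
  mul_lsmul : ∀ c c' x, lsmul (c * c') x = lsmul c (lsmul c' x)
  one_lsmul : ∀ x, lsmul 1 x = x
  rsmul_add : ∀ x y d, rsmul (x + y) d = rsmul x d + rsmul y d
  add_rsmul : ∀ x d d', rsmul x (d + d') = rsmul x d + rsmul x d'
  rsmul_mul : ∀ x d d', rsmul x (d * d') = rsmul (rsmul x d) d'
  rsmul_one : ∀ x, rsmul x 1 = x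
  lsmul_rsmul : ∀ c x d, rsmul (lsmul c x) d = lsmul c (rsmul x d)
  linner_add_left : ∀ x y z, linner (x + y) z = linner x z + linner y z
  linner_add_right : ∀ x y z, linner x (y + z) = linner x y + linner x z
  linner_lsmul_left : ∀ c x y, linner (lsmul c x) y = c * linner x y
  linner_star : ∀ x y, star (linner x y) = linner y x
  rinner_add_left : ∀ x y z, rinner (x + y) z = rinner x z + rinner y z
  rinner_add_right : ∀ x y z, rinner x (y + z) = rinner x y + rinner x z
  rinner_rsmul_right : ∀ x y d, rinner x (rsmul y d) = rinner x y * d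
  rinner_star : ∀ x y, star (rinner x y) = rinner y x
  inner_assoc : ∀ x y z, lsmul (linner x y) z = rsmul x (rinner y z)
  norm_linner_self : ∀ x, ‖linner x x‖ = ‖x‖ ^ 2
  norm_rinner_self : ∀ x, ‖rinner x x‖ = ‖x‖ ^ 2

/-- Fullness of the left inner product: the closed linear span of the left
inner products is all of `C`. -/
def HilbertBimod.LFull {C D Y : Type*} [NormedRing C] [StarRing C] [NormedAlgebra ℂ C]
    [NormedRing D] [StarRing D] [NormedAddCommGroup Y]
    (E : HilbertBimod C D Y) : Prop :=
  (Submodule.span ℂ {c : C | ∃ x y : Y, c = E.linner x y}).topologicalClosure = ⊤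

/-- Fullness of the right inner product. -/
def HilbertBimod.RFull {C D Y : Type*} [NormedRing C] [StarRing C]
    [NormedRing D] [StarRing D] [NormedAlgebra ℂ D] [NormedAddCommGroup Y]
    (E : HilbertBimod C D Y) : Prop :=
  (Submodule.span ℂ {d : D | ∃ x y : Y, d = E.rinner x y}).topologicalClosure = ⊤

/-- A C*-algebraic bundle over a group `G`, presented through the grading it
induces on the C*-algebra `C = ⊕_{t ∈ G} A_t` of its sections:  a family of
closed subspaces `A_t ⊆ C` with `A_t A_s ⊆ A_{ts}`, `A_t* = A_{t⁻¹}`, whose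
internal direct sum is all of `C`. -/
structure CStarBundle (G : Type*) [Group G] [DecidableEq G] (C : Type*)
    [NormedRing C] [StarRing C] [NormedAlgebra ℂ C] where
  fiber : G → Submodule ℂ C
  fiber_closed : ∀ t, IsClosed (fiber t : Set C)
  mul_mem : ∀ {t s : G} {x y : C}, x ∈ fiber t → y ∈ fiber s → x * y ∈ fiber (t * s)
  star_mem : ∀ {t : G} {x : C}, x ∈ fiber t → star x ∈ fiber t⁻¹
  isInternal : DirectSum.IsInternal fiber

/-- A C*-algebraic bundle is saturated if the closed span of `A_t A_t*` is
`A_e` for every `t`. -/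
def CStarBundle.Saturated {G : Type*} [Group G] [DecidableEq G] {C : Type*}
    [NormedRing C] [StarRing C] [NormedAlgebra ℂ C] (𝒜 : CStarBundle G C) : Prop :=
  ∀ t, (Submodule.span ℂ
      {x : C | ∃ a ∈ 𝒜.fiber t, ∃ b ∈ 𝒜.fiber t, x = a * star b}).topologicalClosure
    = 𝒜.fiber 1

/-- The data of an equivalence bundle in the sense of Abadie–Ferraro between
two C*-algebraic bundles with fibers `Afib` (inside `C`) and `Bfib` (inside
`D`):  a grading `{X_t}_{t ∈ G}` of the `C`-`D`-bimodule `Y = ⊕_{t∈G} X_t`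
which is compatible with the two bundle gradings (conditions (1R)-(7R) and
(1L)-(7L) of Abadie–Ferraro). -/
structure EquivBundleData {G : Type*} [Group G] [DecidableEq G] {C D Y : Type*}
    [NormedRing C] [StarRing C] [NormedAlgebra ℂ C]
    [NormedRing D] [StarRing D] [NormedAlgebra ℂ D]
    [NormedAddCommGroup Y]
    (Afib : G → Submodule ℂ C) (Bfib : G → Submodule ℂ D)
    (E : HilbertBimod C D Y) where
  fiber : G → AddSubgroup Y
  fiber_closed : ∀ t, IsClosed (fiber t : Set Y)
  isInternal : DirectSum.IsInternal fiber
  lsmul_mem : ∀ {t s : G} {c : C} {x : Y}, c ∈ Afib t → x ∈ fiber s →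
    E.lsmul c x ∈ fiber (t * s)
  rsmul_mem : ∀ {t s : G} {x : Y} {d : D}, x ∈ fiber t → d ∈ Bfib s →
    E.rsmul x d ∈ fiber (t * s)
  linner_mem : ∀ {t s : G} {x y : Y}, x ∈ fiber t → y ∈ fiber s →
    E.linner x y ∈ Afib (t * s⁻¹)
  rinner_mem : ∀ {t s : G} {x y : Y}, x ∈ fiber t → y ∈ fiber s →
    E.rinner x y ∈ Bfib (t⁻¹ * s)

/-- The strengthened fullness conditions `⟨X_t , X_s⟩_C = A_{ts⁻¹}` and
`⟨X_t , X_s⟩_D = B_{t⁻¹s}` for an equivalence bundle. -/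
def EquivBundleData.StrictSpan {G : Type*} [Group G] [DecidableEq G] {C D Y : Type*}
    [NormedRing C] [StarRing C] [NormedAlgebra ℂ C]
    [NormedRing D] [StarRing D] [NormedAlgebra ℂ D]
    [NormedAddCommGroup Y]
    {Afib : G → Submodule ℂ C} {Bfib : G → Submodule ℂ D}
    {E : HilbertBimod C D Y} (Z : EquivBundleData Afib Bfib E) : Prop :=
  (∀ t s : G, Submodule.span ℂ
      {c : C | ∃ x ∈ Z.fiber t, ∃ y ∈ Z.fiber s, c = E.linner x y} = Afib (t * s⁻¹)) ∧
  (∀ t s : G, Submodule.span ℂ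
      {d : D | ∃ x ∈ Z.fiber t, ∃ y ∈ Z.fiber s, d = E.rinner x y} = Bfib (t⁻¹ * s))

/-- A witness of strong Morita equivalence of the unital inclusions
`A ⊆ C` and `B ⊆ D`:  a `C`-`D`-equivalence bimodule `Y` together with a
closed subspace `X₀ ⊆ Y` which is an `A`-`B`-equivalence bimodule and such
that `⟨Y , X₀⟩_C` is dense in `C` and `⟨Y , X₀⟩_D` is dense in `D`. -/
structure MoritaIncl (C D : Type*)
    [NormedRing C] [StarRing C] [NormedAlgebra ℂ C]
    [NormedRing D] [StarRing D] [NormedAlgebra ℂ D]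
    (A : Submodule ℂ C) (B : Submodule ℂ D) where
  Y : Type
  [instN : NormedAddCommGroup Y]
  [instC : CompleteSpace Y]
  E : HilbertBimod C D Y
  lFull : E.LFull
  rFull : E.RFull
  X₀ : AddSubgroup Y
  closed_X₀ : IsClosed (X₀ : Set Y)
  lsmul_mem : ∀ {a : C} {x : Y}, a ∈ A → x ∈ X₀ → E.lsmul a x ∈ X₀
  rsmul_mem : ∀ {x : Y} {b : D}, x ∈ X₀ → b ∈ B → E.rsmul x b ∈ X₀
  linner_mem : ∀ {x y : Y}, x ∈ X₀ → y ∈ X₀ → E.linner x y ∈ A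
  rinner_mem : ∀ {x y : Y}, x ∈ X₀ → y ∈ X₀ → E.rinner x y ∈ B
  linner_full : (Submodule.span ℂ
      {c : C | ∃ x ∈ X₀, ∃ y ∈ X₀, c = E.linner x y}).topologicalClosure = A
  rinner_full : (Submodule.span ℂ
      {d : D | ∃ x ∈ X₀, ∃ y ∈ X₀, d = E.rinner x y}).topologicalClosure = B
  linner_span : (Submodule.span ℂ
      {c : C | ∃ y : Y, ∃ x ∈ X₀, c = E.linner y x}).topologicalClosure = ⊤
  rinner_span : (Submodule.span ℂ
      {d : D | ∃ y : Y, ∃ x ∈ X₀, d = E.rinner y x}).topologicalClosure = ⊤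

/-- Strong Morita equivalence of the unital inclusions `A ⊆ C` and `B ⊆ D`. -/
def StronglyMoritaEquivalentIncl (C D : Type*)
    [NormedRing C] [StarRing C] [NormedAlgebra ℂ C]
    [NormedRing D] [StarRing D] [NormedAlgebra ℂ D]
    (A : Submodule ℂ C) (B : Submodule ℂ D) : Prop :=
  Nonempty (MoritaIncl C D A B)

/-- Proposition 2.1 of the paper.
Let `𝒜 = {A_t}_{t∈G}` and `ℬ = {B_t}_{t∈G}` be C*-algebraic bundles over a
finite group `G`, with section C*-algebras `C = ⊕_t A_t` and `D = ⊕_t B_t`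
unital and `1_C ∈ A_e`, `1_D ∈ B_e`.  If there exists an `𝒜`-`ℬ`-equivalence
bundle `{X_t}_{t∈G}` with `⟨X_t , X_s⟩_C = A_{ts⁻¹}` and
`⟨X_t , X_s⟩_D = B_{t⁻¹s}` for all `t, s ∈ G`, then the unital inclusions
`A ⊆ C` and `B ⊆ D` are strongly Morita equivalent. -/
theorem equivalence_bundle_implies_strong_morita_of_inclusions
    {G : Type} [Group G] [Fintype G] [DecidableEq G]
    {C D : Type} [CStarAlgebra C] [CStarAlgebra D]
    (𝒜 : CStarBundle G C) (ℬ : CStarBundle G D)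
    (h1A : (1 : C) ∈ 𝒜.fiber 1) (h1B : (1 : D) ∈ ℬ.fiber 1)
    {Y : Type} [NormedAddCommGroup Y] [CompleteSpace Y]
    (E : HilbertBimod C D Y) (hlF : E.LFull) (hrF : E.RFull)
    (Z : EquivBundleData 𝒜.fiber ℬ.fiber E) (hZ : Z.StrictSpan) :
    StronglyMoritaEquivalentIncl C D (𝒜.fiber 1) (ℬ.fiber 1) := by
  classical
  refine ⟨{ Y := Y, E := E, lFull := hlF, rFull := hrF, X₀ := Z.fiber 1,
            closed_X₀ := Z.fiber_closed 1, lsmul_mem := ?_, rsmul_mem := ?_,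
            linner_mem := ?_, rinner_mem := ?_, linner_full := ?_,
            rinner_full := ?_, linner_span := ?_, rinner_span := ?_ }⟩
  · intro a x ha hx
    simpa using Z.lsmul_mem ha hx
  · intro x b hx hb
    simpa using Z.rsmul_mem hx hb
  · intro x y hx hy
    simpa using Z.linner_mem hx hy
  · intro x y hx hy
    simpa using Z.rinner_mem hx hy
  · have h := hZ.1 1 1
    simp only [one_mul, inv_one] at h
    rw [h]
    exact IsClosed.submodule_topologicalClosure_eq (𝒜.fiber_closed 1)
  · have h := hZ.2 1 1
    simp only [one_mul, inv_one] at h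
    rw [h]
    exact IsClosed.submodule_topologicalClosure_eq (ℬ.fiber_closed 1)
  · have hspan : Submodule.span ℂ
        {c : C | ∃ y : Y, ∃ x ∈ Z.fiber 1, c = E.linner y x} = ⊤ := by
      rw [eq_top_iff, ← 𝒜.isInternal.submodule_iSup_eq_top, iSup_le_iff]
      intro t
      have h := hZ.1 t 1
      simp only [inv_one, mul_one] at h
      rw [← h]
      refine Submodule.span_mono ?_
      rintro c ⟨x, hx, y, hy, rfl⟩
      exact ⟨x, y, hy, rfl⟩
    rw [hspan]
    exact IsClosed.submodule_topologicalClosure_eq isClosed_univ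
  · have hspan : Submodule.span ℂ
        {d : D | ∃ y : Y, ∃ x ∈ Z.fiber 1, d = E.rinner y x} = ⊤ := by
      rw [eq_top_iff, ← ℬ.isInternal.submodule_iSup_eq_top, iSup_le_iff]
      intro t
      have h := hZ.2 t⁻¹ 1
      simp only [inv_inv, mul_one] at h
      rw [← h]
      refine Submodule.span_mono ?_
      rintro d ⟨x, hx, y, hy, rfl⟩
      exact ⟨x, y, hy, rfl⟩
    rw [hspan]
    exact IsClosed.submodule_topologicalClosure_eq isClosed_univ
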